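/- Let M be a representation of the equioriented type A_n quiver over ℂ and let 1 ≤ i ≤ j ≤ n. Then there exists a representation N of the equioriented type A_n quiver with M isomorphic to U_{i,j} ⊕ N (direct sum taken componentwise) if and only if r^M_{i,j} − r^M_{i,j+1} > r^M_{i−1,j} − r^M_{i−1,j+1} (with the conventions r^M_{0,·} = 0 and r^M_{·,n+1} = 0). -/

import Mathlib

open Module

/-- A representation of the equioriented type `A_n` quiver over `ℂ`: finite-dimensional
complex vector spaces `V i` (only the indices `1 ≤ i ≤ n` carry content, the spaces at
index `0` and at indices `> n` are required to be trivial) together with linear maps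
`f i : V i → V (i+1)`. -/
structure ARep (n : ℕ) where
  V : ℕ → Type
  [instAddCommGroup : ∀ i, AddCommGroup (V i)]
  [instModule : ∀ i, Module ℂ (V i)]
  [instFiniteDimensional : ∀ i, FiniteDimensional ℂ (V i)]
  f : ∀ i, V i →ₗ[ℂ] V (i + 1)
  triv : ∀ i, i = 0 ∨ n < i → Subsingleton (V i)

attribute [instance] ARep.instAddCommGroup ARep.instModule ARep.instFiniteDimensional

namespace ARep

/-- The composite map `f_{i,i+k} : M_i → M_{i+k}` (the identity for `k = 0`). -/
noncomputable def F {n : ℕ} (M : ARep n) (i : ℕ) : (k : ℕ) → (M.V i →ₗ[ℂ] M.V (i + k))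
  | 0 => LinearMap.id
  | (k + 1) => (M.f (i + k)).comp (M.F i k)

/-- The rank sequence `r^M_{i,j} = rank f_{i,j}`.  (For `i = 0` the source space is
trivial and for `j = n+1` the target space is trivial, so the conventions
`r^M_{0,·} = 0 = r^M_{·,n+1}` hold automatically.) -/
noncomputable def r {n : ℕ} (M : ARep n) (i j : ℕ) : ℕ :=
  Module.finrank ℂ (LinearMap.range (M.F i (j - i)))

end ARep

/-- A morphism of representations of the equioriented type `A_n` quiver. -/
structure ARepHom {n : ℕ} (M N : ARep n) where
  φ : ∀ i, M.V i →ₗ[ℂ] N.V i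
  comm : ∀ i, (φ (i + 1)).comp (M.f i) = (N.f i).comp (φ i)

/-- Two representations are isomorphic if there is a morphism all of whose components
are bijective. -/
def ARepIso {n : ℕ} (M N : ARep n) : Prop :=
  ∃ h : ARepHom M N, ∀ i, Function.Bijective (h.φ i)

/-- The condition for the interval representation `U_{i,j}` to have a nonzero space at
vertex `k`. -/
def Ucond (n i j k : ℕ) : Prop := 1 ≤ k ∧ k ≤ n ∧ i ≤ k ∧ k ≤ j

instance (n i j k : ℕ) : Decidable (Ucond n i j k) := by unfold Ucond; infer_instance

/-- The space of `U_{i,j}` at vertex `k`, realized as a submodule of `ℂ`. -/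
noncomputable def Uspace (n i j k : ℕ) : Submodule ℂ ℂ := if Ucond n i j k then ⊤ else ⊥

/-- The indecomposable interval representation `U_{i,j}` (for `1 ≤ i ≤ j ≤ n`):
one-dimensional at the vertices `i ≤ k ≤ j`, zero elsewhere, with identity structure
maps inside the interval. -/
noncomputable def Urep (n i j : ℕ) : ARep n where
  V k := ↥(Uspace n i j k)
  f k := LinearMap.restrict
    (if Ucond n i j k ∧ Ucond n i j (k + 1) then (LinearMap.id : ℂ →ₗ[ℂ] ℂ) else 0)
    (p := Uspace n i j k) (q := Uspace n i j (k + 1))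
    (by
      intro x hx
      by_cases h : Ucond n i j k ∧ Ucond n i j (k + 1)
      · rw [if_pos h]
        simp [Uspace, if_pos h.2]
      · rw [if_neg h]
        simp)
  triv k hk := by
    have hbot : Uspace n i j k = ⊥ := by
      simp only [Uspace]; rw [if_neg]; unfold Ucond; omega
    have h0 := (Submodule.eq_bot_iff _).mp hbot
    exact ⟨fun a b => Subtype.ext ((h0 a.1 a.2).trans (h0 b.1 b.2).symm)⟩

/-- The componentwise direct sum of two representations. -/
noncomputable def ARep.dsum {n : ℕ} (M N : ARep n) : ARep n where
  V i := M.V i × N.V i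
  f i := (M.f i).prodMap (N.f i)
  triv i hi := by
    haveI := M.triv i hi
    haveI := N.triv i hi
    exact ⟨fun a b => Prod.ext (Subsingleton.elim _ _) (Subsingleton.elim _ _)⟩

/-- A representation is nonzero if some vector space is nonzero. -/
def ARep.Nonzero {n : ℕ} (M : ARep n) : Prop := ∃ i, ∃ v : M.V i, v ≠ 0

/-- The index set of segments `1 ≤ i ≤ j ≤ n`. -/
def SegIdx (n : ℕ) : Type :=
  {p : Fin (n + 1) × Fin (n + 1) // 1 ≤ p.1.1 ∧ p.1.1 ≤ p.2.1}

instance (n : ℕ) : Fintype (SegIdx n) := by unfold SegIdx; infer_instance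

/-- The direct sum `⊕_{1 ≤ i ≤ j ≤ n} U_{i,j}^{⊕ m i j}`, taken componentwise. -/
noncomputable def sumU (n : ℕ) (m : ℕ → ℕ → ℕ) : ARep n where
  V k := ∀ p : SegIdx n, Fin (m p.1.1.1 p.1.2.1) → (Urep n p.1.1.1 p.1.2.1).V k
  f k := LinearMap.pi fun p =>
    (((Urep n p.1.1.1 p.1.2.1).f k).compLeft (Fin (m p.1.1.1 p.1.2.1))).comp
      (LinearMap.proj p)
  triv k hk := by
    haveI := fun p : SegIdx n => (Urep n p.1.1.1 p.1.2.1).triv k hk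
    exact ⟨fun a b => funext fun p => Subsingleton.elim _ _⟩

/-- The space of morphisms `Hom(M,N)` realized as a subspace of the product of the
spaces of componentwise linear maps. -/
noncomputable def HomSubspace {n : ℕ} (M N : ARep n) :
    Submodule ℂ (∀ k, M.V k →ₗ[ℂ] N.V k) where
  carrier := {φ | ∀ k, (φ (k + 1)).comp (M.f k) = (N.f k).comp (φ k)}
  add_mem' := by
    intro a b ha hb k
    simp only [Pi.add_apply, LinearMap.add_comp, LinearMap.comp_add, ha k, hb k]
  zero_mem' := by
    intro k
    simp
  smul_mem' := by
    intro c a ha k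
    simp only [Pi.smul_apply, LinearMap.smul_comp, LinearMap.comp_smul, ha k]

/-- The quotient of a representation by a family of subspaces stable under the
structure maps. -/
noncomputable def ARep.quot {n : ℕ} (M : ARep n) (S : ∀ k, Submodule ℂ (M.V k))
    (h : ∀ k, S k ≤ (S (k + 1)).comap (M.f k)) : ARep n where
  V k := M.V k ⧸ S k
  f k := Submodule.mapQ (S k) (S (k + 1)) (M.f k) (h k)
  triv k hk := by
    haveI := M.triv k hk
    refine ⟨fun a b => ?_⟩
    obtain ⟨x, rfl⟩ := Submodule.Quotient.mk_surjective _ a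
    obtain ⟨y, rfl⟩ := Submodule.Quotient.mk_surjective _ b
    exact congrArg _ (Subsingleton.elim x y)

/-- The quotient `M / ι(L)` of `M` by the image of a morphism `ι : L → M`. -/
noncomputable def quotByHom {n : ℕ} {L M : ARep n} (ι : ARepHom L M) : ARep n :=
  M.quot (fun k => LinearMap.range (ι.φ k)) (by
    intro k x hx
    obtain ⟨y, rfl⟩ := hx
    rw [Submodule.mem_comap]
    exact ⟨L.f k y, LinearMap.congr_fun (ι.comm k) y⟩)

/-- The subrepresentation of `M` given by a family of subspaces stable under the
structure maps. -/
noncomputable def ARep.sub {n : ℕ} (M : ARep n) (N : ∀ i, Submodule ℂ (M.V i))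
    (h : ∀ i, ∀ x ∈ N i, M.f i x ∈ N (i + 1)) : ARep n where
  V i := ↥(N i)
  f i := (M.f i).restrict (h i)
  triv i hi := by
    haveI := M.triv i hi
    exact ⟨fun a b => Subtype.ext (Subsingleton.elim _ _)⟩

/-- The subquotient representation `P/S` of `M`, for families of subspaces
`S k ≤ P k` both stable under the structure maps. -/
noncomputable def ARep.subquot {n : ℕ} (M : ARep n) (P S : ∀ k, Submodule ℂ (M.V k))
    (hSP : ∀ k, S k ≤ P k)
    (hP : ∀ k, ∀ x ∈ P k, M.f k x ∈ P (k + 1))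
    (hS : ∀ k, ∀ x ∈ S k, M.f k x ∈ S (k + 1)) : ARep n where
  V k := ↥(P k) ⧸ (S k).comap (P k).subtype
  f k := Submodule.mapQ _ _ ((M.f k).restrict (hP k)) (by
    intro x hx
    rw [Submodule.mem_comap] at hx ⊢
    exact hS k x.1 hx)
  triv k hk := by
    haveI := M.triv k hk
    haveI : Subsingleton (↥(P k)) := ⟨fun a b => Subtype.ext (Subsingleton.elim _ _)⟩
    refine ⟨fun a b => ?_⟩
    obtain ⟨x, rfl⟩ := Submodule.Quotient.mk_surjective _ a
    obtain ⟨y, rfl⟩ := Submodule.Quotient.mk_surjective _ b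
    exact congrArg _ (Subsingleton.elim x y)

/-- A `σ`-compatible `ε`-form on the underlying graded vector space of `M` making `M`
an `ε`-representation: a nondegenerate bilinear form `B` on `M^0 = ⊕_i M_i` with
`B v w = ε B w v`, with `B (M_i) (M_j) = 0` unless `i + j = n + 1` (i.e. `j = σ(i)`),
and anti-compatible with the structure maps. -/
structure EpsForm (n : ℕ) (M : ARep n) (ε : ℂ) where
  B : (∀ i, M.V i) →ₗ[ℂ] (∀ i, M.V i) →ₗ[ℂ] ℂ
  nondeg : ∀ v, (∀ w, B v w = 0) → v = 0
  eps_symm : ∀ v w, B v w = ε * B w v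
  graded : ∀ (i j : ℕ) (v : M.V i) (w : M.V j), i + j ≠ n + 1 →
    B (Pi.single i v) (Pi.single j w) = 0
  compat : ∀ i, 1 ≤ i → i + 1 ≤ n → ∀ (v : M.V i) (w : M.V (n - i)),
    B (Pi.single (i + 1) (M.f i v)) (Pi.single (n - i) w)
      + B (Pi.single i v) (Pi.single (n - i + 1) (M.f (n - i) w)) = 0

/-- The orthogonal complement, at vertex `p`, of the image of a morphism `ι : L → M`
with respect to the form `E`. -/
noncomputable def perpAt {n : ℕ} {L M : ARep n} {ε : ℂ} (E : EpsForm n M ε)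
    (ι : ARepHom L M) (p : ℕ) : Submodule ℂ (M.V p) where
  carrier := {y | ∀ (q : ℕ) (x : M.V q), x ∈ LinearMap.range (ι.φ q) →
    E.B (Pi.single p y) (Pi.single q x) = 0}
  add_mem' := by
    intro a b ha hb q x hx
    rw [Pi.single_add, map_add, LinearMap.add_apply, ha q x hx, hb q x hx, add_zero]
  zero_mem' := by
    intro q x hx
    rw [Pi.single_zero, map_zero, LinearMap.zero_apply]
  smul_mem' := by
    intro c a ha q x hx
    rw [Pi.single_smul, map_smul, LinearMap.smul_apply, ha q x hx, smul_zero]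


section AuxSummand

open LinearMap Submodule

variable {n : ℕ}

/-- Transport along an equality of indices. -/
def castV (M : ARep n) {a b : ℕ} (h : a = b) : M.V a ≃ₗ[ℂ] M.V b := by
  subst h; exact LinearEquiv.refl ℂ (M.V a)

@[simp] lemma castV_rfl (M : ARep n) {a : ℕ} (h : a = a) :
    castV M h = LinearEquiv.refl ℂ (M.V a) := rfl

/-- The composite `f_{a,b} : M_a → M_b`, defined to be `0` when `b < a`. -/
noncomputable def Fto (M : ARep n) (a : ℕ) : (b : ℕ) → (M.V a →ₗ[ℂ] M.V b)
  | 0 => if h : a = 0 then (castV M h).toLinearMap else 0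
  | (b+1) => if h : a = b + 1 then (castV M h).toLinearMap else (M.f b).comp (Fto M a b)

lemma Fto_self (M : ARep n) (a : ℕ) : Fto M a a = LinearMap.id := by
  cases a <;> simp [Fto]

lemma Fto_succ (M : ARep n) {a b : ℕ} (h : a ≤ b) :
    Fto M a (b+1) = (M.f b).comp (Fto M a b) := by
  simp only [Fto]; rw [dif_neg (by omega)]

lemma Fto_zero_of_lt (M : ARep n) {a b : ℕ} (h : b < a) : Fto M a b = 0 := by
  induction b with
  | zero => simp only [Fto]; rw [dif_neg (by omega)]
  | succ b ih =>
      simp only [Fto]; rw [dif_neg (by omega), ih (by omega)]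
      simp

lemma Fto_succ_self (M : ARep n) (a : ℕ) : Fto M a (a+1) = M.f a := by
  rw [Fto_succ M le_rfl, Fto_self, LinearMap.comp_id]

lemma Fto_comp (M : ARep n) {a b c : ℕ} (hab : a ≤ b) (hbc : b ≤ c) :
    Fto M a c = (Fto M b c).comp (Fto M a b) := by
  induction c with
  | zero =>
      have hb : b = 0 := by omega
      have ha : a = 0 := by omega
      subst hb; subst ha
      rw [Fto_self]; simp
  | succ c ih =>
      by_cases hbc' : b = c + 1
      · subst hbc'; rw [Fto_self]; simp
      · have hbc'' : b ≤ c := by omega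
        have hac : a ≤ c := le_trans hab hbc''
        rw [Fto_succ M hac, Fto_succ M hbc'', ih hbc'', LinearMap.comp_assoc]

lemma Fto_add (M : ARep n) (a d : ℕ) : Fto M a (a + d) = M.F a d := by
  induction d with
  | zero => exact Fto_self M a
  | succ d ih =>
      show Fto M a ((a + d) + 1) = _
      rw [Fto_succ M (Nat.le_add_right a d), ih]
      rfl

lemma r_eq (M : ARep n) {a b : ℕ} (h : a ≤ b) :
    M.r a b = Module.finrank ℂ (LinearMap.range (Fto M a b)) := by
  obtain ⟨d, rfl⟩ : ∃ d, b = a + d := ⟨b - a, by omega⟩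
  rw [ARep.r]
  suffices H : ∀ e, e = d → Module.finrank ℂ (LinearMap.range (M.F a e))
      = Module.finrank ℂ (LinearMap.range (Fto M a (a + d))) by
    exact H _ (by omega)
  intro e he; subst he
  rw [← Fto_add]

/-- Rank–nullity for the restriction of a map to a submodule. -/
lemma finrank_map_add_inf {A B : Type} [AddCommGroup A] [Module ℂ A]
    [AddCommGroup B] [Module ℂ B] [FiniteDimensional ℂ A]
    (h : A →ₗ[ℂ] B) (p : Submodule ℂ A) :
    Module.finrank ℂ (p.map h) + Module.finrank ℂ ((LinearMap.ker h) ⊓ p : Submodule ℂ A)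
      = Module.finrank ℂ p := by
  have H := LinearMap.finrank_range_add_finrank_ker (h.domRestrict p)
  rw [LinearMap.range_domRestrict, LinearMap.ker_domRestrict] at H
  have e1 : (LinearMap.ker h).comap p.subtype
      = ((LinearMap.ker h) ⊓ p).comap p.subtype := by
    rw [Submodule.comap_inf, Submodule.comap_subtype_self, inf_top_eq]
  rw [e1, (Submodule.comapSubtypeEquivOfLe (inf_le_right :
      (LinearMap.ker h) ⊓ p ≤ p)).finrank_eq] at H
  simpa using H

lemma rank_diff (M : ARep n) {a j : ℕ} (haj : a ≤ j) :
    M.r a j = M.r a (j+1)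
      + Module.finrank ℂ ((LinearMap.ker (M.f j)) ⊓ LinearMap.range (Fto M a j) :
          Submodule ℂ (M.V j)) := by
  rw [r_eq M haj, r_eq M (le_trans haj (Nat.le_succ j)), Fto_succ M haj,
    LinearMap.range_comp]
  exact (finrank_map_add_inf (M.f j) (LinearMap.range (Fto M a j))).symm

lemma range_Fto_mono (M : ARep n) {a b j : ℕ} (hab : a ≤ b) (hbj : b ≤ j) :
    LinearMap.range (Fto M a j) ≤ LinearMap.range (Fto M b j) := by
  rw [Fto_comp M hab hbj]
  exact LinearMap.range_comp_le_range _ _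

lemma second_diff_mono (P : ARep n) {i j : ℕ} (h1 : 1 ≤ i) (hij : i ≤ j) :
    (P.r (i-1) j : ℤ) - P.r (i-1) (j+1) ≤ (P.r i j : ℤ) - P.r i (j+1) := by
  have hd1 := rank_diff P hij
  have hd2 := rank_diff P (show i - 1 ≤ j by omega)
  have hmono : Module.finrank ℂ
      ((LinearMap.ker (P.f j)) ⊓ LinearMap.range (Fto P (i-1) j) : Submodule ℂ (P.V j))
      ≤ Module.finrank ℂ
      ((LinearMap.ker (P.f j)) ⊓ LinearMap.range (Fto P i j) : Submodule ℂ (P.V j)) :=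
    Submodule.finrank_mono (inf_le_inf_left _ (range_Fto_mono P (by omega) hij))
  omega

lemma Fto_comm {M M' : ARep n} (h : ARepHom M M') (a b : ℕ) :
    (h.φ b).comp (Fto M a b) = (Fto M' a b).comp (h.φ a) := by
  induction b with
  | zero =>
      by_cases h0 : a = 0
      · subst h0; rw [Fto_self, Fto_self]; simp
      · rw [Fto_zero_of_lt M (by omega), Fto_zero_of_lt M' (by omega)]; simp
  | succ b ih =>
      by_cases he : a = b + 1
      · subst he; rw [Fto_self, Fto_self]; simp
      · by_cases hl : a ≤ b
        · rw [Fto_succ M hl, Fto_succ M' hl, ← LinearMap.comp_assoc,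
            h.comm b, LinearMap.comp_assoc, ih, LinearMap.comp_assoc]
        · rw [Fto_zero_of_lt M (by omega), Fto_zero_of_lt M' (by omega)]; simp

lemma r_iso {M M' : ARep n} (e : ARepIso M M') {a b : ℕ} (hab : a ≤ b) :
    M.r a b = M'.r a b := by
  obtain ⟨h, hbij⟩ := e
  rw [r_eq M hab, r_eq M' hab]
  let eb : M.V b ≃ₗ[ℂ] M'.V b := LinearEquiv.ofBijective (h.φ b) (hbij b)
  have h1 : LinearMap.range (Fto M' a b)
      = Submodule.map (eb : M.V b →ₗ[ℂ] M'.V b) (LinearMap.range (Fto M a b)) := by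
    have hsurj : LinearMap.range (h.φ a) = ⊤ :=
      LinearMap.range_eq_top.mpr (hbij a).surjective
    rw [← LinearMap.range_comp_of_range_eq_top (Fto M' a b) hsurj, ← Fto_comm h a b,
      LinearMap.range_comp]
    rfl
  rw [h1, LinearEquiv.finrank_map_eq]

lemma Fto_dsum (M N : ARep n) (a b : ℕ) :
    Fto (M.dsum N) a b = (Fto M a b).prodMap (Fto N a b) := by
  induction b with
  | zero =>
      by_cases h0 : a = 0
      · subst h0; rw [Fto_self, Fto_self, Fto_self, LinearMap.prodMap_id]; rfl
      · rw [Fto_zero_of_lt _ (by omega), Fto_zero_of_lt _ (by omega),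
          Fto_zero_of_lt _ (by omega)]
        ext x <;> rfl
  | succ b ih =>
      by_cases he : a = b + 1
      · subst he; rw [Fto_self, Fto_self, Fto_self, LinearMap.prodMap_id]; rfl
      · by_cases hl : a ≤ b
        · rw [Fto_succ _ hl, Fto_succ _ hl, Fto_succ _ hl, ih]
          show ((M.f b).prodMap (N.f b)).comp _ = _
          exact LinearMap.prodMap_comp ..
        · rw [Fto_zero_of_lt _ (by omega), Fto_zero_of_lt _ (by omega),
            Fto_zero_of_lt _ (by omega)]
          ext x <;> rfl

/-- A product of submodules is linearly equivalent to the product of the submodules. -/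
noncomputable def prodSubEquiv {A B : Type} [AddCommGroup A] [Module ℂ A]
    [AddCommGroup B] [Module ℂ B] (p : Submodule ℂ A) (q : Submodule ℂ B) :
    ↥(p.prod q) ≃ₗ[ℂ] (↥p × ↥q) where
  toFun x := (⟨x.1.1, x.2.1⟩, ⟨x.1.2, x.2.2⟩)
  invFun y := ⟨(y.1.1, y.2.1), ⟨y.1.2, y.2.2⟩⟩
  map_add' x y := rfl
  map_smul' c x := rfl
  left_inv x := rfl
  right_inv y := rfl

lemma range_prodMap' {A B C D : Type} [AddCommGroup A] [Module ℂ A]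
    [AddCommGroup B] [Module ℂ B] [AddCommGroup C] [Module ℂ C]
    [AddCommGroup D] [Module ℂ D] (f : A →ₗ[ℂ] B) (g : C →ₗ[ℂ] D) :
    LinearMap.range (f.prodMap g) = (LinearMap.range f).prod (LinearMap.range g) := by
  ext ⟨x, y⟩
  simp only [LinearMap.mem_range, Submodule.mem_prod, Prod.exists,
    LinearMap.prodMap_apply, Prod.mk.injEq]
  constructor
  · rintro ⟨a, b, h1, h2⟩; exact ⟨⟨a, h1⟩, ⟨b, h2⟩⟩
  · rintro ⟨⟨a, h1⟩, ⟨b, h2⟩⟩; exact ⟨a, b, h1, h2⟩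

lemma r_dsum (M N : ARep n) {a b : ℕ} (hab : a ≤ b) :
    (M.dsum N).r a b = M.r a b + N.r a b := by
  rw [r_eq _ hab, r_eq _ hab, r_eq _ hab, Fto_dsum]
  have := (prodSubEquiv (LinearMap.range (Fto M a b)) (LinearMap.range (Fto N a b))).finrank_eq
  rw [Module.finrank_prod] at this
  rw [← this, ← range_prodMap']
  rfl

lemma Uspace_eq_top {i j k : ℕ} (h : Ucond n i j k) : Uspace n i j k = ⊤ := by
  simp only [Uspace]; rw [if_pos h]

lemma Uspace_eq_bot {i j k : ℕ} (h : ¬ Ucond n i j k) : Uspace n i j k = ⊥ := by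
  simp only [Uspace]; rw [if_neg h]

lemma Usub {i j k : ℕ} (h : ¬ Ucond n i j k) : Subsingleton ((Urep n i j).V k) := by
  have hb0 := (Submodule.eq_bot_iff _).mp (Uspace_eq_bot h)
  exact ⟨fun a b => Subtype.ext ((hb0 a.1 a.2).trans (hb0 b.1 b.2).symm)⟩

lemma r_zero_src (M : ARep n) {a b : ℕ} (hs : Subsingleton (M.V a)) (hab : a ≤ b) :
    M.r a b = 0 := by
  rw [r_eq M hab]
  have : LinearMap.range (Fto M a b) = ⊥ := by
    rw [eq_bot_iff]
    rintro y ⟨x, rfl⟩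
    have : x = 0 := Subsingleton.elim x 0
    rw [this, map_zero]
    exact Submodule.zero_mem ⊥
  rw [this, finrank_bot]

lemma r_zero_tgt (M : ARep n) {a b : ℕ} (hs : Subsingleton (M.V b)) (hab : a ≤ b) :
    M.r a b = 0 := by
  rw [r_eq M hab]
  have : LinearMap.range (Fto M a b) = ⊥ := by
    rw [eq_bot_iff]
    rintro y -
    have : y = 0 := Subsingleton.elim y 0
    rw [this]
    exact Submodule.zero_mem ⊥
  rw [this, finrank_bot]

lemma rU_full {i j : ℕ} (h1 : 1 ≤ i) (hij : i ≤ j) (hj : j ≤ n) :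
    (Urep n i j).r i j = 1 := by
  rw [r_eq _ hij]
  have hsurj : ∀ b, i ≤ b → b ≤ j → LinearMap.range (Fto (Urep n i j) i b) = ⊤ := by
    intro b
    induction b with
    | zero => intro hb1 _; omega
    | succ b ih =>
        intro hb1 hb2
        by_cases hib : i = b + 1
        · subst hib; rw [Fto_self]; exact LinearMap.range_id
        · have hib' : i ≤ b := by omega
          rw [Fto_succ _ hib', LinearMap.range_comp, ih hib' (by omega),
            Submodule.map_top]
          rw [LinearMap.range_eq_top]
          intro y
          have hcb : Ucond n i j b := ⟨by omega, by omega, hib', by omega⟩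
          have hcb1 : Ucond n i j (b+1) := ⟨by omega, by omega, by omega, hb2⟩
          have hmem : y.1 ∈ Uspace n i j b := by
            rw [Uspace_eq_top hcb]; trivial
          refine ⟨⟨y.1, hmem⟩, Subtype.ext ?_⟩
          have hra : (((Urep n i j).f b) ⟨y.1, hmem⟩ : (Urep n i j).V (b+1)).1
              = ((if Ucond n i j b ∧ Ucond n i j (b+1) then (LinearMap.id : ℂ →ₗ[ℂ] ℂ)
                else 0) : ℂ →ₗ[ℂ] ℂ) y.1 := rfl
          rw [hra, if_pos ⟨hcb, hcb1⟩]
          rfl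
  rw [hsurj j hij le_rfl, finrank_top]
  show Module.finrank ℂ (Uspace n i j j) = 1
  rw [Uspace_eq_top ⟨by omega, hj, hij, le_rfl⟩, finrank_top, Module.finrank_self]

/-- The projection functionals `π_k` used to split off a copy of `U_{i,j}`. -/
noncomputable def pim (M : ARep n) (i j : ℕ) (g : M.V j →ₗ[ℂ] ℂ) (k : ℕ) :
    M.V k →ₗ[ℂ] ℂ :=
  if Ucond n i j k then g.comp (Fto M k j) else 0

/-- The generating vectors of the copy of `U_{i,j}` inside `M`. -/
noncomputable def evec (M : ARep n) (i j : ℕ) (v : M.V i) (k : ℕ) : M.V k :=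
  if Ucond n i j k then Fto M i k v else 0

lemma pim_evec (M : ARep n) {i j : ℕ} (g : M.V j →ₗ[ℂ] ℂ) (v : M.V i)
    (hg1 : g (Fto M i j v) = 1) {k : ℕ} (hk : Ucond n i j k) :
    pim M i j g k (evec M i j v k) = 1 := by
  rw [pim, evec, if_pos hk, if_pos hk]
  show g (Fto M k j (Fto M i k v)) = 1
  rw [← LinearMap.comp_apply (Fto M k j), ← Fto_comp M hk.2.2.1 hk.2.2.2, hg1]

lemma pim_comp (M : ARep n) {i j : ℕ} (h1 : 1 ≤ i) (hij : i ≤ j) (hj : j ≤ n)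
    (g : M.V j →ₗ[ℂ] ℂ)
    (hg0 : ∀ x ∈ LinearMap.range (Fto M (i-1) j), g x = 0) (k : ℕ) :
    (pim M i j g (k+1)).comp (M.f k)
      = if Ucond n i j k ∧ Ucond n i j (k+1) then pim M i j g k else 0 := by
  by_cases hk1 : Ucond n i j (k+1)
  · by_cases hk : Ucond n i j k
    · rw [if_pos ⟨hk, hk1⟩]
      simp only [pim, if_pos hk1, if_pos hk]
      rw [LinearMap.comp_assoc]
      congr 1
      rw [← Fto_succ_self M k, ← Fto_comp M (Nat.le_succ k) hk1.2.2.2]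
    · rw [if_neg (fun hh => hk hh.1)]
      have hki : k + 1 = i := by
        obtain ⟨a1, a2, a3, a4⟩ := hk1
        simp only [Ucond, not_and_or, not_le] at hk
        omega
      simp only [pim, if_pos hk1]
      ext x
      simp only [LinearMap.comp_apply, LinearMap.zero_apply]
      apply hg0
      rw [show i - 1 = k by omega,
        Fto_comp M (Nat.le_succ k) (show k + 1 ≤ j from hk1.2.2.2), Fto_succ_self M k]
      exact ⟨x, rfl⟩
  · rw [if_neg (fun hh => hk1 hh.2)]
    simp only [pim, if_neg hk1]
    ext x; simp

lemma evec_step (M : ARep n) {i j : ℕ} (h1 : 1 ≤ i) (hij : i ≤ j) (hj : j ≤ n)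
    (g : M.V j →ₗ[ℂ] ℂ) (v : M.V i)
    (hg0 : ∀ x ∈ LinearMap.range (Fto M (i-1) j), g x = 0)
    (hw0 : M.f j (Fto M i j v) = 0) (k : ℕ) (x : M.V k) :
    M.f k (x - pim M i j g k x • evec M i j v k)
      = M.f k x - pim M i j g (k+1) (M.f k x) • evec M i j v (k+1) := by
  rw [map_sub, map_smul]
  congr 1
  have hP2 := LinearMap.congr_fun (pim_comp M h1 hij hj g hg0 k) x
  simp only [LinearMap.comp_apply] at hP2
  by_cases hk : Ucond n i j k
  · by_cases hk1 : Ucond n i j (k+1)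
    · rw [hP2, if_pos ⟨hk, hk1⟩]
      congr 1
      rw [evec, evec, if_pos hk, if_pos hk1, Fto_succ M hk.2.2.1, LinearMap.comp_apply]
    · rw [hP2, if_neg (fun hh => hk1 hh.2)]
      have hkj : k = j := by
        obtain ⟨a1, a2, a3, a4⟩ := hk
        simp only [Ucond, not_and_or, not_le] at hk1
        omega
      subst hkj
      rw [evec, if_pos hk, hw0, smul_zero]
      simp
  · rw [hP2, if_neg (fun hh => hk hh.1)]
    have : pim M i j g k x = 0 := by rw [pim, if_neg hk]; rfl
    rw [this]
    simp

end AuxSummand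
theorem interval_summand_iff (n : ℕ) (hn : 1 ≤ n) (M : ARep n) (i j : ℕ)
    (h1 : 1 ≤ i) (hij : i ≤ j) (hj : j ≤ n) :
    (∃ N : ARep n, ARepIso M ((Urep n i j).dsum N)) ↔
      (M.r (i - 1) j : ℤ) - (M.r (i - 1) (j + 1) : ℤ)
        < (M.r i j : ℤ) - (M.r i (j + 1) : ℤ) := by
  classical
  have hij' : i - 1 ≤ j := by omega
  have hd1 := rank_diff M hij
  have hd2 := rank_diff M hij'
  have key : ((M.r (i-1) j : ℤ) - M.r (i-1) (j+1) < (M.r i j : ℤ) - M.r i (j+1))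
      ↔ Module.finrank ℂ ((LinearMap.ker (M.f j)) ⊓ LinearMap.range (Fto M (i-1) j) :
            Submodule ℂ (M.V j))
        < Module.finrank ℂ ((LinearMap.ker (M.f j)) ⊓ LinearMap.range (Fto M i j) :
            Submodule ℂ (M.V j)) := by
    rw [hd1, hd2]; push_cast; omega
  constructor
  · rintro ⟨N, hiso⟩
    have e1 : M.r i j = (Urep n i j).r i j + N.r i j := by
      rw [r_iso hiso hij, r_dsum _ _ hij]
    have e2 : M.r i (j+1) = (Urep n i j).r i (j+1) + N.r i (j+1) := by
      rw [r_iso hiso (by omega), r_dsum _ _ (by omega)]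
    have e3 : M.r (i-1) j = (Urep n i j).r (i-1) j + N.r (i-1) j := by
      rw [r_iso hiso hij', r_dsum _ _ hij']
    have e4 : M.r (i-1) (j+1) = (Urep n i j).r (i-1) (j+1) + N.r (i-1) (j+1) := by
      rw [r_iso hiso (by omega), r_dsum _ _ (by omega)]
    have u1 : (Urep n i j).r i j = 1 := rU_full h1 hij hj
    have u2 : (Urep n i j).r i (j+1) = 0 :=
      r_zero_tgt _ (Usub (fun h => absurd h.2.2.2 (by omega))) (by omega)
    have u3 : (Urep n i j).r (i-1) j = 0 :=
      r_zero_src _ (Usub (fun h => absurd h.2.2.1 (by omega))) hij'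
    have u4 : (Urep n i j).r (i-1) (j+1) = 0 :=
      r_zero_src _ (Usub (fun h => absurd h.2.2.1 (by omega))) (by omega)
    have hsd := second_diff_mono N h1 hij
    omega
  · intro hlt
    have hC := key.mp hlt
    have hle : ¬ ((LinearMap.ker (M.f j)) ⊓ LinearMap.range (Fto M i j)
        ≤ (LinearMap.ker (M.f j)) ⊓ LinearMap.range (Fto M (i-1) j)) := by
      intro hle
      exact absurd (Submodule.finrank_mono hle) (by omega)
    obtain ⟨w, hwKR, hwR'⟩ := SetLike.not_le_iff_exists.mp hle
    obtain ⟨hwK, hwR⟩ := hwKR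
    have hwnR' : w ∉ LinearMap.range (Fto M (i-1) j) := fun hw => hwR' ⟨hwK, hw⟩
    obtain ⟨v, hv⟩ := hwR
    obtain ⟨g, hg1, hg0⟩ : ∃ g : M.V j →ₗ[ℂ] ℂ, g w = 1 ∧
        ∀ x ∈ LinearMap.range (Fto M (i-1) j), g x = 0 := by
      have hq : (LinearMap.range (Fto M (i-1) j)).mkQ w ≠ 0 := by
        simpa [Submodule.Quotient.mk_eq_zero] using hwnR'
      have hnall : ¬ ∀ φ : Module.Dual ℂ (M.V j ⧸ LinearMap.range (Fto M (i-1) j)),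
          φ ((LinearMap.range (Fto M (i-1) j)).mkQ w) = 0 := by
        rw [Module.forall_dual_apply_eq_zero_iff]; exact hq
      push_neg at hnall
      obtain ⟨φ, hφ⟩ := hnall
      refine ⟨(φ ((LinearMap.range (Fto M (i-1) j)).mkQ w))⁻¹
        • (φ.comp (LinearMap.range (Fto M (i-1) j)).mkQ), ?_, ?_⟩
      · simp only [LinearMap.smul_apply, LinearMap.comp_apply, smul_eq_mul]
        exact inv_mul_cancel₀ hφ
      · intro x hx
        have hx0 : (LinearMap.range (Fto M (i-1) j)).mkQ x = 0 := by
          simpa [Submodule.Quotient.mk_eq_zero] using hx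
        simp [hx0]
    have hg1' : g (Fto M i j v) = 1 := by rw [hv]; exact hg1
    have hw0 : M.f j (Fto M i j v) = 0 := by rw [hv]; exact hwK
    have hstab : ∀ k, ∀ x ∈ LinearMap.ker (pim M i j g k),
        M.f k x ∈ LinearMap.ker (pim M i j g (k+1)) := by
      intro k x hx
      rw [LinearMap.mem_ker] at hx ⊢
      have hP2 := LinearMap.congr_fun (pim_comp M h1 hij hj g hg0 k) x
      simp only [LinearMap.comp_apply] at hP2
      rw [hP2]
      split_ifs with h
      · exact hx
      · rfl
    refine ⟨ARep.sub M (fun k => LinearMap.ker (pim M i j g k)) hstab, ?_⟩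
    have hmemU : ∀ k (x : M.V k), pim M i j g k x ∈ Uspace n i j k := by
      intro k x
      by_cases hU : Ucond n i j k
      · rw [Uspace_eq_top hU]; trivial
      · rw [Uspace_eq_bot hU, Submodule.mem_bot, pim, if_neg hU]; rfl
    have hmemKer : ∀ k (x : M.V k),
        x - pim M i j g k x • evec M i j v k ∈ LinearMap.ker (pim M i j g k) := by
      intro k x
      rw [LinearMap.mem_ker, map_sub, map_smul]
      by_cases hU : Ucond n i j k
      · rw [pim_evec M g v hg1' hU]
        simp [smul_eq_mul]
      · have h0 : pim M i j g k = 0 := by rw [pim, if_neg hU]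
        simp [h0]
    let A : ∀ k, M.V k →ₗ[ℂ] ↥(Uspace n i j k) :=
      fun k => LinearMap.codRestrict (Uspace n i j k) (pim M i j g k) (hmemU k)
    let B : ∀ k, M.V k →ₗ[ℂ] ↥(LinearMap.ker (pim M i j g k)) :=
      fun k => LinearMap.codRestrict _
        (LinearMap.id - (pim M i j g k).smulRight (evec M i j v k)) (hmemKer k)
    refine ⟨⟨fun k => (A k).prod (B k), ?_⟩, ?_⟩
    · -- commutation
      intro k
      refine LinearMap.ext fun x => ?_
      refine Prod.ext ?_ ?_
      · apply Subtype.ext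
        have hP2 := LinearMap.congr_fun (pim_comp M h1 hij hj g hg0 k) x
        simp only [LinearMap.comp_apply] at hP2
        show pim M i j g (k+1) (M.f k x)
          = ((if Ucond n i j k ∧ Ucond n i j (k+1) then (LinearMap.id : ℂ →ₗ[ℂ] ℂ)
              else 0) : ℂ →ₗ[ℂ] ℂ) (pim M i j g k x)
        rw [hP2]
        split_ifs <;> rfl
      · apply Subtype.ext
        show M.f k x - pim M i j g (k+1) (M.f k x) • evec M i j v (k+1)
          = M.f k (x - pim M i j g k x • evec M i j v k)
        exact (evec_step M h1 hij hj g v hg0 hw0 k x).symm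
    · -- bijectivity
      intro k
      constructor
      · intro x y hxy
        have hv1 : pim M i j g k x = pim M i j g k y :=
          congrArg Subtype.val (congrArg Prod.fst hxy)
        have hv2 : x - pim M i j g k x • evec M i j v k
            = y - pim M i j g k y • evec M i j v k :=
          congrArg Subtype.val (congrArg Prod.snd hxy)
        rw [hv1] at hv2
        exact sub_left_inj.mp hv2
      · rintro ⟨u, w'⟩
        refine ⟨w'.1 + u.1 • evec M i j v k, ?_⟩
        have hπ : pim M i j g k (w'.1 + u.1 • evec M i j v k) = u.1 := by
          rw [map_add, map_smul, LinearMap.mem_ker.mp w'.2]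
          by_cases hU : Ucond n i j k
          · rw [pim_evec M g v hg1' hU]
            simp [smul_eq_mul]
          · have hu0 : u.1 = 0 :=
              ((Submodule.eq_bot_iff _).mp (Uspace_eq_bot hU)) u.1 u.2
            have h0 : pim M i j g k = 0 := by rw [pim, if_neg hU]
            simp [h0, hu0]
        refine Prod.ext (Subtype.ext ?_) (Subtype.ext ?_)
        · exact hπ
        · show (w'.1 + u.1 • evec M i j v k)
            - pim M i j g k (w'.1 + u.1 • evec M i j v k) • evec M i j v k = w'.1
          rw [hπ]
          abel
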